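/- Let X = (X_1,...,X_d) be an absolutely continuous random vector with density f and continuous marginal CDFs F_i. Then the differential entropy decomposes as H(X) = Σ_{i=1}^d H(X_i) + H(U), where U = (F_1(X_1),...,F_d(X_d)) is distributed according to the copula of X. -/

import Mathlib

open MeasureTheory Set Real

section AuxEntropyCopula
open ENNReal NNReal

lemma lintegral_pi_prod {n : ℕ} (g : Fin n → ℝ → ℝ≥0∞) (hg : ∀ i, Measurable (g i)) :
    ∫⁻ x : Fin n → ℝ, ∏ i, g i (x i) = ∏ i, ∫⁻ t, g i t := by
  induction n with
  | zero => simp [volume_pi, lintegral_const]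
  | succ n n_ih =>
      calc
        _ = ∫⁻ x : ℝ × (Fin n → ℝ), g 0 x.1 * ∏ i : Fin n, g i.succ (x.2 i) := by
          rw [volume_pi, ← ((measurePreserving_piFinSuccAbove
            (fun _ : Fin (n+1) => (volume : Measure ℝ)) 0).symm).lintegral_comp
            (f := fun x : Fin (n+1) → ℝ => ∏ i, g i (x i))
            (Finset.measurable_prod _ (fun i _ => (hg i).comp (measurable_pi_apply i)))]
          refine lintegral_congr fun a => ?_
          simp [MeasurableEquiv.piFinSuccAbove_symm_apply, Fin.prod_univ_succ,
            Fin.insertNthEquiv, Fin.insertNth_zero, Fin.zero_succAbove]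
        _ = (∫⁻ t, g 0 t) * ∏ i : Fin n, ∫⁻ t, g i.succ t := by
          rw [← n_ih _ (fun i => hg i.succ), ← lintegral_prod_mul (hg 0).aemeasurable
            (Finset.measurable_prod _ (fun i _ => (hg i.succ).comp
              (measurable_pi_apply i))).aemeasurable]
          rfl
        _ = ∏ i, ∫⁻ t, g i t := by rw [Fin.prod_univ_succ]

lemma map_cdf (fi : ℝ → ℝ) (Fc : ℝ → ℝ) (hm : Measurable fi) (hpos : ∀ t, 0 < fi t)
    (hone : ∫⁻ t, ENNReal.ofReal (fi t) = 1)
    (hFc : ∀ t, Fc t = ∫ s in Iic t, fi s) (hcont : Continuous Fc) :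
    (volume.withDensity (fun t => ENNReal.ofReal (fi t))).map Fc
      = volume.restrict (Icc (0:ℝ) 1) := by
  set μ := volume.withDensity (fun t => ENNReal.ofReal (fi t)) with hμ
  have hμuniv : μ univ = 1 := by
    rw [hμ, withDensity_apply _ MeasurableSet.univ, setLIntegral_univ, hone]
  have hfin : IsFiniteMeasure μ := ⟨by rw [hμuniv]; exact ENNReal.one_lt_top⟩
  have hfi_int : Integrable fi := by
    refine ⟨hm.aestronglyMeasurable, ?_⟩
    rw [HasFiniteIntegral]
    have : ∀ t, ‖fi t‖ₑ = ENNReal.ofReal (fi t) := fun t =>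
      Real.enorm_eq_ofReal (hpos t).le
    simp_rw [this, hone]
    exact ENNReal.one_lt_top
  have hμIic : ∀ t, μ (Iic t) = ENNReal.ofReal (Fc t) := by
    intro t
    rw [hμ, withDensity_apply _ measurableSet_Iic, hFc t,
      ofReal_integral_eq_lintegral_ofReal (hfi_int.integrableOn)
        (Filter.Eventually.of_forall fun s => (hpos s).le)]
  have hsm : StrictMono Fc := by
    intro s t hst
    have hsub : Iic s ∪ Ioc s t = Iic t := Iic_union_Ioc_eq_Iic hst.le
    have hdisj : Disjoint (Iic s) (Ioc s t) := by
      simp [Set.disjoint_left]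
      intro a ha; exact fun h => absurd ha (not_le.mpr h)
    have : Fc t = Fc s + ∫ u in Ioc s t, fi u := by
      rw [hFc t, hFc s, ← setIntegral_union hdisj measurableSet_Ioc
        hfi_int.integrableOn hfi_int.integrableOn, hsub]
    rw [this]
    have hposint : 0 < ∫ u in Ioc s t, fi u := by
      refine (setIntegral_pos_iff_support_of_nonneg_ae
        (Filter.Eventually.of_forall fun s => (hpos s).le) hfi_int.integrableOn).2 ?_
      have : Function.support fi = univ := by
        ext u; simp [Function.mem_support, (hpos u).ne']
      rw [this, univ_inter, Real.volume_Ioc]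
      simp [hst]
    linarith
  have hFcpos : ∀ t, 0 < Fc t := by
    intro t
    rw [hFc t]
    refine (setIntegral_pos_iff_support_of_nonneg_ae
      (Filter.Eventually.of_forall fun s => (hpos s).le) hfi_int.integrableOn).2 ?_
    have : Function.support fi = univ := by
      ext u; simp [Function.mem_support, (hpos u).ne']
    rw [this, univ_inter]
    simp [Real.volume_Iic]
  have hFcReal : ∀ t, Fc t = (μ (Iic t)).toReal := by
    intro t; rw [hμIic t, ENNReal.toReal_ofReal (by linarith [hFcpos t])]
  have htop : Filter.Tendsto Fc Filter.atTop (nhds 1) := by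
    have h1 : Filter.Tendsto (fun t => μ (Iic t)) Filter.atTop (nhds (μ univ)) :=
      tendsto_measure_Iic_atTop μ
    rw [hμuniv] at h1
    have h2 := (ENNReal.continuousAt_toReal (by simp)).tendsto.comp h1
    exact h2.congr fun t => (hFcReal t).symm
  have hbot : Filter.Tendsto Fc Filter.atBot (nhds 0) := by
    have h1 : Filter.Tendsto (fun t => μ (Iic t)) Filter.atBot (nhds 0) := by
      have hi : (⋂ t : ℝ, Iic t) = (∅ : Set ℝ) := by
        ext x
        simp only [mem_iInter, mem_Iic, mem_empty_iff_false, iff_false, not_forall, not_le]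
        exact ⟨x - 1, by linarith⟩
      have := tendsto_measure_iInter_atBot (μ := μ)
        (fun t : ℝ => measurableSet_Iic.nullMeasurableSet)
        (fun s t hst => Iic_subset_Iic.2 hst) ⟨0, by finiteness⟩
      rw [hi] at this
      rw [measure_empty] at this
      exact this
    have h2 := (ENNReal.continuousAt_toReal (by simp)).tendsto.comp h1
    exact h2.congr fun t => (hFcReal t).symm
  have hFclt : ∀ t, Fc t < 1 := by
    intro t
    have h4 : Fc t < Fc (t+1) := hsm (by linarith)
    have h5 : ∀ᶠ u in Filter.atTop, Fc (t+1) ≤ Fc u := by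
      filter_upwards [Filter.eventually_ge_atTop (t+1)] with u hu
      exact (hsm.le_iff_le).2 hu
    have h6 := ge_of_tendsto htop h5
    linarith
  -- now prove map equality
  have hFcm : Measurable Fc := hcont.measurable
  refine Measure.ext_of_Iic (μ.map Fc) _ (fun u => ?_)
  rw [Measure.map_apply hFcm measurableSet_Iic]
  rw [Measure.restrict_apply measurableSet_Iic]
  rcases le_or_gt u 0 with hu | hu
  · have hpre : Fc ⁻¹' Iic u = ∅ := by
      ext t; simp only [mem_preimage, mem_Iic, mem_empty_iff_false, iff_false, not_le]
      exact lt_of_le_of_lt hu (hFcpos t)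
    rw [hpre]
    have : Iic u ∩ Icc (0:ℝ) 1 ⊆ Iic 0 ∩ Icc 0 1 := by
      intro x hx; exact ⟨le_trans hx.1 hu, hx.2⟩
    have h0 : Iic u ∩ Icc (0:ℝ) 1 ⊆ {0} := by
      intro x hx; simp only [mem_singleton_iff]
      exact le_antisymm (le_trans hx.1 hu) hx.2.1
    simp only [measure_empty]
    exact (measure_mono_null h0 Real.volume_singleton).symm
  · rcases le_or_gt 1 u with hu1 | hu1
    · have hpre : Fc ⁻¹' Iic u = univ := by
        ext t; simp only [mem_preimage, mem_Iic, mem_univ, iff_true]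
        exact le_trans (hFclt t).le hu1
      rw [hpre, hμuniv]
      have : Iic u ∩ Icc (0:ℝ) 1 = Icc 0 1 := by
        rw [inter_eq_right]
        intro x hx; exact le_trans hx.2 hu1
      rw [this, Real.volume_Icc]
      norm_num
    · -- 0 < u < 1
      obtain ⟨q, hq⟩ : ∃ q, Fc q = u := by
        have h1 : ∀ᶠ t in Filter.atBot, Fc t ≤ u :=
          hbot.eventually_le_const hu
        have h2 : ∀ᶠ t in Filter.atTop, u ≤ Fc t :=
          htop.eventually_const_le hu1
        exact intermediate_value_univ₂_eventually₂ hcont continuous_const h1 h2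
      have hpre : Fc ⁻¹' Iic u = Iic q := by
        ext t; simp only [mem_preimage, mem_Iic, ← hq]
        exact hsm.le_iff_le
      rw [hpre, hμIic, hq]
      have : Iic u ∩ Icc (0:ℝ) 1 = Icc 0 u := by
        ext x
        simp only [mem_inter_iff, mem_Iic, mem_Icc]
        constructor
        · rintro ⟨h1, h2, h3⟩; exact ⟨h2, h1⟩
        · rintro ⟨h1, h2⟩; exact ⟨h2, h1, le_trans h2 hu1.le⟩
      rw [this, Real.volume_Icc]
      simp

lemma map_T (d : ℕ) (fi : Fin d → ℝ → ℝ) (Fc : Fin d → ℝ → ℝ)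
    (hfimeas : ∀ i, Measurable (fi i)) (hfipos : ∀ i t, 0 < fi i t)
    (hone : ∀ i, ∫⁻ t, ENNReal.ofReal (fi i t) = 1)
    (hFc : ∀ i t, Fc i t = ∫ s in Iic t, fi i s) (hFccont : ∀ i, Continuous (Fc i)) :
    (volume.withDensity (fun x : Fin d → ℝ => ENNReal.ofReal (∏ i, fi i (x i)))).map
      (fun x i => Fc i (x i))
      = volume.restrict (univ.pi fun _ : Fin d => Icc (0:ℝ) 1) := by
  set μi : Fin d → Measure ℝ := fun i => volume.withDensity (fun t => ENNReal.ofReal (fi i t))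
    with hμi
  have hA : volume.withDensity (fun x : Fin d → ℝ => ENNReal.ofReal (∏ i, fi i (x i)))
      = Measure.pi μi := by
    refine (Measure.pi_eq fun s hs => ?_).symm
    rw [withDensity_apply _ (MeasurableSet.univ_pi hs),
      ← lintegral_indicator (MeasurableSet.univ_pi hs) _]
    have key : ∀ x : Fin d → ℝ,
        (univ.pi s).indicator (fun x : Fin d → ℝ => ENNReal.ofReal (∏ i, fi i (x i))) x
          = ∏ i, ((s i).indicator (fun t => ENNReal.ofReal (fi i t)) (x i)) := by
      intro x
      by_cases hx : x ∈ univ.pi s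
      · rw [indicator_of_mem hx, ENNReal.ofReal_prod_of_nonneg (fun i _ => (hfipos i _).le)]
        exact Finset.prod_congr rfl fun i _ =>
          (indicator_of_mem (hx i (mem_univ i)) (fun t => ENNReal.ofReal (fi i t))).symm
      · rw [indicator_of_notMem hx]
        obtain ⟨j, hj⟩ : ∃ j, x j ∉ s j := by
          by_contra h; push_neg at h; exact hx fun i _ => h i
        exact (Finset.prod_eq_zero (Finset.mem_univ j) (indicator_of_notMem hj _)).symm
    simp_rw [key]
    rw [lintegral_pi_prod _ (fun i => ((hfimeas i).ennreal_ofReal).indicator (hs i))]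
    exact Finset.prod_congr rfl fun i _ => by
      rw [lintegral_indicator (hs i) _, ← withDensity_apply _ (hs i)]
  have hTmeas : Measurable (fun x : Fin d → ℝ => fun i => Fc i (x i)) :=
    measurable_pi_lambda _ fun i => (hFccont i).measurable.comp (measurable_pi_apply i)
  have hB : (Measure.pi μi).map (fun x i => Fc i (x i))
      = Measure.pi (fun _ : Fin d => volume.restrict (Icc (0:ℝ) 1)) := by
    refine (Measure.pi_eq fun s hs => ?_).symm
    rw [Measure.map_apply hTmeas (MeasurableSet.univ_pi hs)]
    have hpre : (fun x : Fin d → ℝ => fun i => Fc i (x i)) ⁻¹' (univ.pi s)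
        = univ.pi (fun i => Fc i ⁻¹' s i) := by
      ext x; simp [mem_univ_pi]
    rw [hpre, Measure.pi_pi]
    refine Finset.prod_congr rfl fun i _ => ?_
    rw [← map_cdf (fi i) (Fc i) (hfimeas i) (hfipos i) (hone i) (hFc i) (hFccont i),
      Measure.map_apply (hFccont i).measurable (hs i)]
  rw [hA, hB]
  refine (Measure.pi_eq fun s hs => ?_)
  rw [Measure.restrict_apply (MeasurableSet.univ_pi hs), ← pi_inter_distrib, volume_pi_pi]
  exact Finset.prod_congr rfl fun i _ => (Measure.restrict_apply (hs i)).symm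

lemma integral_withDensity_ofReal {α : Type*} [MeasurableSpace α] {μ : Measure α}
    {f : α → ℝ} (hf : Measurable f) (hnn : ∀ x, 0 ≤ f x) (g : α → ℝ) :
    ∫ a, g a ∂(μ.withDensity fun x => ENNReal.ofReal (f x)) = ∫ a, f a * g a ∂μ := by
  rw [show (μ.withDensity fun x => ENNReal.ofReal (f x))
      = μ.withDensity (fun x => ((f x).toNNReal : ℝ≥0∞)) from rfl,
    integral_withDensity_eq_integral_smul hf.real_toNNReal g]
  exact integral_congr_ae (Filter.Eventually.of_forall fun x => by
    show (f x).toNNReal • g x = f x * g x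
    rw [NNReal.smul_def, Real.coe_toNNReal _ (hnn x), smul_eq_mul])

end AuxEntropyCopula

/-- Entropy decomposition H(X) = Σᵢ H(Xᵢ) + H(U), where U follows the
copula of the absolutely continuous random vector X with density f, marginal densities
fi and marginal CDFs Fc. -/
theorem entropy_decomposition_copula
    (d : ℕ) (hd : 2 ≤ d)
    (f : (Fin d → ℝ) → ℝ) (fi : Fin d → ℝ → ℝ) (Fc : Fin d → ℝ → ℝ)
    (c : (Fin d → ℝ) → ℝ)
    (hfmeas : Measurable f) (hfnn : ∀ x, 0 ≤ f x)
    (hfprob : ∫ x, f x = 1)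
    (hfimeas : ∀ i, Measurable (fi i)) (hfipos : ∀ i t, 0 < fi i t)
    -- fi i is the i-th marginal density of f
    (hmarg : ∀ i, (volume.withDensity (fun x => ENNReal.ofReal (f x))).map
      (fun x : Fin d → ℝ => x i)
      = volume.withDensity (fun t => ENNReal.ofReal (fi i t)))
    -- Fc i is the (continuous) CDF of the i-th marginal
    (hFc : ∀ i t, Fc i t = ∫ s in Set.Iic t, fi i s)
    (hFccont : ∀ i, Continuous (Fc i))
    -- c is the copula density of X
    (hcop : ∀ x, f x = c (fun i => Fc i (x i)) * ∏ i, fi i (x i))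
    -- all entropies involved are well defined and finite
    (hint : Integrable (fun x => f x * Real.log (f x)))
    (hinti : ∀ i, Integrable (fun t => fi i t * Real.log (fi i t)))
    (hintc : IntegrableOn (fun u => c u * Real.log (c u))
      (Set.univ.pi (fun _ : Fin d => Set.Icc (0:ℝ) 1))) :
    -(∫ x, f x * Real.log (f x))
      = (∑ i, -(∫ t, fi i t * Real.log (fi i t)))
        + -(∫ u in Set.univ.pi (fun _ : Fin d => Set.Icc (0:ℝ) 1),
            c u * Real.log (c u)) := by
  set T : (Fin d → ℝ) → (Fin d → ℝ) := fun x i => Fc i (x i) with hT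
  set g : (Fin d → ℝ) → ℝ := fun u => c u * Real.log (c u) with hg
  set μX := volume.withDensity (fun x => ENNReal.ofReal (f x)) with hμX
  set ν := volume.withDensity
    (fun x : Fin d → ℝ => ENNReal.ofReal (∏ i, fi i (x i))) with hν
  -- basic facts
  have hfint : Integrable f := by
    by_contra h
    rw [integral_undef h] at hfprob
    norm_num at hfprob
  have hfl1 : ∫⁻ x, ENNReal.ofReal (f x) = 1 := by
    rw [← ofReal_integral_eq_lintegral_ofReal hfint
      (Filter.Eventually.of_forall hfnn), hfprob, ENNReal.ofReal_one]
  have hμXuniv : μX univ = 1 := by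
    rw [hμX, withDensity_apply _ MeasurableSet.univ, setLIntegral_univ, hfl1]
  have hone : ∀ i, ∫⁻ t, ENNReal.ofReal (fi i t) = 1 := by
    intro i
    have h1 : (volume.withDensity (fun t => ENNReal.ofReal (fi i t))) univ = 1 := by
      rw [← hmarg i, Measure.map_apply (measurable_pi_apply i) MeasurableSet.univ,
        preimage_univ, hμXuniv]
    rwa [withDensity_apply _ MeasurableSet.univ, setLIntegral_univ] at h1
  have hTmeas : Measurable T :=
    measurable_pi_lambda _ fun i => (hFccont i).measurable.comp (measurable_pi_apply i)
  -- marginal entropy identities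
  have margInt : ∀ i, Integrable (fun x => f x * Real.log (fi i (x i))) := by
    intro i
    have hlogm : Measurable fun t => Real.log (fi i t) :=
      Real.measurable_log.comp (hfimeas i)
    have Int1 : Integrable (fun t => Real.log (fi i t))
        (volume.withDensity (fun t => ENNReal.ofReal (fi i t))) := by
      rw [integrable_withDensity_iff (hfimeas i).ennreal_ofReal
        (Filter.Eventually.of_forall fun t => ENNReal.ofReal_lt_top)]
      refine (hinti i).congr (Filter.Eventually.of_forall fun t => ?_)
      simp only [ENNReal.toReal_ofReal (hfipos i t).le]
      ring
    have Int2 : Integrable (fun x : Fin d → ℝ => Real.log (fi i (x i))) μX := by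
      have := (integrable_map_measure
        (g := fun t => Real.log (fi i t))
        (by rw [hmarg i]; exact hlogm.aestronglyMeasurable)
        (measurable_pi_apply i).aemeasurable).mp (by rw [hmarg i]; exact Int1)
      exact this
    rw [hμX] at Int2
    rw [integrable_withDensity_iff hfmeas.ennreal_ofReal
      (Filter.Eventually.of_forall fun x => ENNReal.ofReal_lt_top)] at Int2
    refine Int2.congr (Filter.Eventually.of_forall fun x => ?_)
    simp only [ENNReal.toReal_ofReal (hfnn x)]
    ring
  have margEq : ∀ i, ∫ x, f x * Real.log (fi i (x i))
      = ∫ t, fi i t * Real.log (fi i t) := by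
    intro i
    have hlogm : Measurable fun t => Real.log (fi i t) :=
      Real.measurable_log.comp (hfimeas i)
    have h1 : ∫ x, f x * Real.log (fi i (x i))
        = ∫ x, Real.log (fi i (x i)) ∂μX := by
      rw [hμX, integral_withDensity_ofReal hfmeas hfnn]
    have h2 : ∫ x, Real.log (fi i (x i)) ∂μX
        = ∫ t, Real.log (fi i t) ∂(μX.map (fun x : Fin d → ℝ => x i)) := by
      rw [integral_map (measurable_pi_apply i).aemeasurable
        (by rw [hmarg i]; exact hlogm.aestronglyMeasurable)]
    have h3 : ∫ t, Real.log (fi i t) ∂(μX.map (fun x : Fin d → ℝ => x i))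
        = ∫ t, fi i t * Real.log (fi i t) := by
      rw [hmarg i, integral_withDensity_ofReal (hfimeas i) (fun t => (hfipos i t).le)]
    rw [h1, h2, h3]
  -- copula part
  have hmapT : ν.map T = volume.restrict (univ.pi fun _ : Fin d => Icc (0:ℝ) 1) :=
    map_T d fi Fc hfimeas hfipos hone hFc hFccont
  have hprodpos : ∀ x : Fin d → ℝ, 0 < ∏ i, fi i (x i) :=
    fun x => Finset.prod_pos fun i _ => hfipos i (x i)
  have hptc : ∀ x, f x * Real.log (c (T x)) = g (T x) * ∏ i, fi i (x i) := by
    intro x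
    rw [hg]
    simp only
    rw [hcop x]
    ring
  have hgsm : AEStronglyMeasurable g (ν.map T) := by
    rw [hmapT]; exact hintc.1
  have IntC1 : Integrable g (ν.map T) := by rw [hmapT]; exact hintc
  have IntC2 : Integrable (fun x => g (T x)) ν :=
    (integrable_map_measure hgsm hTmeas.aemeasurable).mp IntC1
  have hprodmeas : Measurable fun x : Fin d → ℝ => ∏ i, fi i (x i) :=
    Finset.measurable_prod _ fun i _ => (hfimeas i).comp (measurable_pi_apply i)
  have IntC3 : Integrable (fun x => f x * Real.log (c (T x))) := by
    rw [hν] at IntC2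
    rw [integrable_withDensity_iff hprodmeas.ennreal_ofReal
      (Filter.Eventually.of_forall fun x => ENNReal.ofReal_lt_top)] at IntC2
    refine IntC2.congr (Filter.Eventually.of_forall fun x => ?_)
    simp only [ENNReal.toReal_ofReal (hprodpos x).le]
    exact (hptc x).symm
  have copEq : ∫ x, f x * Real.log (c (T x))
      = ∫ u in univ.pi (fun _ : Fin d => Icc (0:ℝ) 1), c u * Real.log (c u) := by
    have h1 : ∫ x, f x * Real.log (c (T x)) = ∫ x, g (T x) ∂ν := by
      rw [hν, integral_withDensity_ofReal hprodmeas (fun x => (hprodpos x).le)]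
      refine integral_congr_ae (Filter.Eventually.of_forall fun x => ?_)
      show f x * Real.log (c (T x)) = (∏ i, fi i (x i)) * g (T x)
      rw [hptc x, mul_comm]
    have h2 : ∫ x, g (T x) ∂ν = ∫ u, g u ∂(ν.map T) :=
      (integral_map hTmeas.aemeasurable hgsm).symm
    rw [h1, h2, hmapT]
  -- pointwise decomposition
  have hpt : ∀ x, f x * Real.log (f x)
      = f x * Real.log (c (T x)) + ∑ i, f x * Real.log (fi i (x i)) := by
    intro x
    rcases eq_or_lt_of_le (hfnn x) with h0 | hpos
    · rw [← h0]; simp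
    · have hcpos : 0 < c (T x) := by
        have h1 : 0 < c (T x) * ∏ i, fi i (x i) := by rw [← hcop x]; exact hpos
        by_contra h
        push_neg at h
        nlinarith [hprodpos x]
      have hlog : Real.log (f x)
          = Real.log (c (T x)) + ∑ i, Real.log (fi i (x i)) := by
        rw [hcop x, Real.log_mul hcpos.ne' (hprodpos x).ne',
          Real.log_prod (fun i _ => (hfipos i (x i)).ne')]
      rw [hlog, mul_add, Finset.mul_sum]
  have hsplit : ∫ x, f x * Real.log (f x)
      = (∫ x, f x * Real.log (c (T x)))
        + ∑ i, ∫ x, f x * Real.log (fi i (x i)) := by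
    have : (fun x => f x * Real.log (f x))
        = fun x => f x * Real.log (c (T x)) + ∑ i, f x * Real.log (fi i (x i)) :=
      funext hpt
    rw [this, integral_add IntC3 (integrable_finset_sum _ fun i _ => margInt i),
      integral_finset_sum _ fun i _ => margInt i]
  rw [hsplit, copEq]
  simp only [margEq]
  rw [neg_add]
  rw [← Finset.sum_neg_distrib]
  ring
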